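/- Let u : [0,∞) → ℝⁿ solve u' = N(u) with N smooth, and let ϑ = 1/3 + O(τ). Then the two-stage scheme u* = u + τN(u)/(3(1−ϑ)) + τ²N_t(u)/(12(1−ϑ)), u⁺ = u + τN(u) + (ϑτ²/2)N_t(u) + ((1−ϑ)τ²/2)N_t(u*) satisfies u⁺ = u(t+τ) + O(τ⁵), i.e. the two-stage method is fourth-order accurate. -/

import Mathlib

open Asymptotics Filter

/-- `N_t(v) = DN(v)·N(v)`, the derivative of `N` along the flow of `u' = N(u)`. -/
noncomputable def flowDeriv {n : ℕ} (N : (Fin n → ℝ) → Fin n → ℝ)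
    (v : Fin n → ℝ) : Fin n → ℝ :=
  fderiv ℝ N v (N v)


open Asymptotics Filter Set

set_option maxHeartbeats 1000000

lemma isBigO_pow_succ_of_hasDerivAt {E : Type*} [NormedAddCommGroup E] [NormedSpace ℝ E]
    {g g' : ℝ → E} {k : ℕ} (hg : ∀ s, HasDerivAt g (g' s) s) (h0 : g 0 = 0)
    (h : g' =O[nhds 0] fun s => s ^ k) : g =O[nhds 0] fun s => s ^ (k + 1) := by
  obtain ⟨C, hC⟩ := h.bound
  rw [Metric.eventually_nhds_iff] at hC
  obtain ⟨δ, hδpos, hball⟩ := hC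
  rw [isBigO_iff]
  refine ⟨|C|, Metric.eventually_nhds_iff.mpr ⟨δ, hδpos, fun {x} hx => ?_⟩⟩
  have hxd : |x| < δ := by simpa [Real.dist_eq] using hx
  have bound : ∀ y, |y| ≤ |x| → ‖g' y‖ ≤ |C| * |x| ^ k := by
    intro y hy
    have h1 : ‖g' y‖ ≤ C * ‖y ^ k‖ :=
      hball (by simpa [Real.dist_eq] using lt_of_le_of_lt hy hxd)
    have h2 : C * ‖y ^ k‖ ≤ |C| * |x| ^ k := by
      rw [norm_pow, Real.norm_eq_abs]
      have : C * |y| ^ k ≤ |C| * |y| ^ k :=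
        mul_le_mul_of_nonneg_right (le_abs_self C) (by positivity)
      refine this.trans (mul_le_mul_of_nonneg_left (pow_le_pow_left₀ (abs_nonneg y) hy k) (abs_nonneg C))
    exact h1.trans h2
  have hnorm : ‖x ^ (k+1)‖ = |x| ^ k * |x| := by
    rw [norm_pow, Real.norm_eq_abs, pow_succ]
  rcases le_total 0 x with hx0 | hx0
  · have key := norm_image_sub_le_of_norm_deriv_le_segment'
      (f := g) (f' := g') (C := |C| * |x| ^ k) (a := 0) (b := x)
      (fun y _ => (hg y).hasDerivWithinAt)
      (fun y hy => bound y (by rw [abs_of_nonneg hy.1]; exact le_trans hy.2.le (le_abs_self x)))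
      x (right_mem_Icc.mpr hx0)
    rw [h0, sub_zero, sub_zero] at key
    calc ‖g x‖ ≤ |C| * |x| ^ k * x := key
      _ ≤ |C| * ‖x ^ (k+1)‖ := by
          rw [hnorm, ← mul_assoc]
          exact mul_le_mul_of_nonneg_left (le_abs_self x) (by positivity)
  · have key := norm_image_sub_le_of_norm_deriv_le_segment'
      (f := g) (f' := g') (C := |C| * |x| ^ k) (a := x) (b := 0)
      (fun y _ => (hg y).hasDerivWithinAt)
      (fun y hy => bound y (by rw [abs_of_nonpos (le_of_lt hy.2)]; simp [abs_of_nonpos hx0]; linarith [hy.1]))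
      0 (right_mem_Icc.mpr hx0)
    rw [h0, zero_sub, norm_neg] at key
    calc ‖g x‖ ≤ |C| * |x| ^ k * (0 - x) := key
      _ ≤ |C| * ‖x ^ (k+1)‖ := by
          rw [hnorm, ← mul_assoc, zero_sub]
          exact mul_le_mul_of_nonneg_left (neg_le_abs x) (by positivity)

lemma smul_const_isBigO {α : Type*} {F : Type*} [NormedAddCommGroup F] [NormedSpace ℝ F]
    {l : Filter α} {f g : α → ℝ} (h : f =O[l] g) (x : F) :
    (fun τ => f τ • x) =O[l] g :=
  (IsBigO.of_bound ‖x‖ (Eventually.of_forall fun τ => by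
    rw [norm_smul]; exact (mul_comm _ _).le)).trans h

lemma cubic_remainder_bound {n : ℕ} {F : Type*} [NormedAddCommGroup F] [NormedSpace ℝ F]
    {g : (Fin n → ℝ) → F} (hg : ContDiff ℝ 3 g) (v : Fin n → ℝ) :
    ∃ M : ℝ, 0 ≤ M ∧ ∀ w : Fin n → ℝ, ‖w‖ ≤ 1 →
      ‖g (v + w) - g v - fderiv ℝ g v w - (2⁻¹ : ℝ) • fderiv ℝ (fderiv ℝ g) v w w‖
        ≤ M * ‖w‖ ^ 3 := by
  have hD1 : ContDiff ℝ 2 (fderiv ℝ g) := hg.fderiv_right (by norm_num)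
  have hD2 : ContDiff ℝ 1 (fderiv ℝ (fderiv ℝ g)) := hD1.fderiv_right (by norm_num)
  have hD3c :=
    (hD2.fderiv_right (m := 0) (by norm_num)).continuous
  obtain ⟨C, hC⟩ := (isCompact_closedBall v 2).exists_bound_of_continuousOn hD3c.continuousOn
  set M := max C 0 with hMdef
  have hM0 : 0 ≤ M := le_max_right _ _
  have hlip : ∀ x ∈ Metric.closedBall v 2,
      ‖fderiv ℝ (fderiv ℝ g) x - fderiv ℝ (fderiv ℝ g) v‖ ≤ M * ‖x - v‖ := by
    intro x hx
    exact (convex_closedBall v 2).norm_image_sub_le_of_norm_fderiv_le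
      (fun y _ => (hD2.differentiable one_ne_zero).differentiableAt)
      (fun y hy => le_trans (hC y hy) (le_max_left _ _))
      (Metric.mem_closedBall_self (by norm_num)) hx
  have hR1 : ∀ w : Fin n → ℝ, ‖w‖ ≤ 1 →
      ‖fderiv ℝ g (v + w) - fderiv ℝ g v - fderiv ℝ (fderiv ℝ g) v w‖ ≤ M * ‖w‖ ^ 2 := by
    intro w hw
    set φ := fun s : ℝ => fderiv ℝ g (v + s • w) - fderiv ℝ g v - s • fderiv ℝ (fderiv ℝ g) v w
      with hφdef
    have hφderiv : ∀ s : ℝ, HasDerivAt φ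
        ((fderiv ℝ (fderiv ℝ g) (v + s • w) - fderiv ℝ (fderiv ℝ g) v) w) s := by
      intro s
      have hc : HasDerivAt (fun s : ℝ => v + s • w) w s := by
        simpa using ((hasDerivAt_id s).smul_const w).const_add v
      have houter : HasDerivAt (fun s : ℝ => fderiv ℝ g (v + s • w))
          (fderiv ℝ (fderiv ℝ g) (v + s • w) w) s :=
        ((hD1.differentiable two_ne_zero).differentiableAt.hasFDerivAt).comp_hasDerivAt s hc
      have hlin : HasDerivAt (fun s : ℝ => s • fderiv ℝ (fderiv ℝ g) v w)
          (fderiv ℝ (fderiv ℝ g) v w) s := by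
        simpa using (hasDerivAt_id s).smul_const (fderiv ℝ (fderiv ℝ g) v w)
      have := (houter.sub_const (fderiv ℝ g v)).sub hlin
      rw [ContinuousLinearMap.sub_apply]; exact this
    have hbound : ∀ s ∈ Ico (0:ℝ) 1,
        ‖(fderiv ℝ (fderiv ℝ g) (v + s • w) - fderiv ℝ (fderiv ℝ g) v) w‖ ≤ M * ‖w‖ ^ 2 := by
      intro s hs
      have hsw : ‖s • w‖ ≤ ‖w‖ := by
        rw [norm_smul, Real.norm_eq_abs, abs_of_nonneg hs.1]
        exact mul_le_of_le_one_left (norm_nonneg w) hs.2.le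
      have hmem : v + s • w ∈ Metric.closedBall v 2 := by
        simp only [Metric.mem_closedBall, dist_eq_norm, add_sub_cancel_left]
        exact hsw.trans (hw.trans (by norm_num))
      calc ‖(fderiv ℝ (fderiv ℝ g) (v + s • w) - fderiv ℝ (fderiv ℝ g) v) w‖
          ≤ ‖fderiv ℝ (fderiv ℝ g) (v + s • w) - fderiv ℝ (fderiv ℝ g) v‖ * ‖w‖ :=
            ContinuousLinearMap.le_opNorm _ w
        _ ≤ (M * ‖s • w‖) * ‖w‖ := by
            have := hlip (v + s • w) hmem
            rw [add_sub_cancel_left] at this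
            exact mul_le_mul_of_nonneg_right this (norm_nonneg w)
        _ ≤ M * ‖w‖ ^ 2 := by
            rw [sq, ← mul_assoc]
            exact mul_le_mul_of_nonneg_right
              (mul_le_mul_of_nonneg_left hsw hM0) (norm_nonneg w)
    have key := norm_image_sub_le_of_norm_deriv_le_segment'
      (f := φ) (f' := fun s => (fderiv ℝ (fderiv ℝ g) (v + s • w) - fderiv ℝ (fderiv ℝ g) v) w)
      (C := M * ‖w‖ ^ 2) (a := 0) (b := 1)
      (fun s _ => (hφderiv s).hasDerivWithinAt) hbound 1 (right_mem_Icc.mpr zero_le_one)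
    have hφ0 : φ 0 = 0 := by simp [hφdef]
    have hφ1 : φ 1 = fderiv ℝ g (v + w) - fderiv ℝ g v - fderiv ℝ (fderiv ℝ g) v w := by
      simp [hφdef]
    rw [hφ0, hφ1, sub_zero] at key
    simpa using key
  refine ⟨M, hM0, fun w hw => ?_⟩
  set ψ := fun s : ℝ => g (v + s • w) - g v - s • fderiv ℝ g v w
      - (s ^ 2 / 2) • fderiv ℝ (fderiv ℝ g) v w w with hψdef
  have hψderiv : ∀ s : ℝ, HasDerivAt ψ
      ((fderiv ℝ g (v + s • w) - fderiv ℝ g v - fderiv ℝ (fderiv ℝ g) v (s • w)) w) s := by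
    intro s
    have hc : HasDerivAt (fun s : ℝ => v + s • w) w s := by
      simpa using ((hasDerivAt_id s).smul_const w).const_add v
    have houter : HasDerivAt (fun s : ℝ => g (v + s • w)) (fderiv ℝ g (v + s • w) w) s :=
      ((hg.differentiable (by norm_num)).differentiableAt.hasFDerivAt).comp_hasDerivAt s hc
    have hlin : HasDerivAt (fun s : ℝ => s • fderiv ℝ g v w) (fderiv ℝ g v w) s := by
      simpa using (hasDerivAt_id s).smul_const (fderiv ℝ g v w)
    have hquad : HasDerivAt (fun s : ℝ => (s ^ 2 / 2) • fderiv ℝ (fderiv ℝ g) v w w)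
        (s • fderiv ℝ (fderiv ℝ g) v w w) s := by
      have h1 : HasDerivAt (fun s : ℝ => s ^ 2 / 2) s s := by
        have := (hasDerivAt_pow 2 s).div_const 2
        norm_num at this
        simpa using this
      simpa using h1.smul_const (fderiv ℝ (fderiv ℝ g) v w w)
    have := ((houter.sub_const (g v)).sub hlin).sub hquad
    have heq : fderiv ℝ g (v + s • w) w - fderiv ℝ g v w - s • fderiv ℝ (fderiv ℝ g) v w w
        = (fderiv ℝ g (v + s • w) - fderiv ℝ g v - fderiv ℝ (fderiv ℝ g) v (s • w)) w := by
      simp [ContinuousLinearMap.sub_apply, (fderiv ℝ (fderiv ℝ g) v).map_smul,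
        ContinuousLinearMap.smul_apply]
    rw [← heq]; exact this
  have hbound : ∀ s ∈ Ico (0:ℝ) 1,
      ‖(fderiv ℝ g (v + s • w) - fderiv ℝ g v - fderiv ℝ (fderiv ℝ g) v (s • w)) w‖
        ≤ M * ‖w‖ ^ 3 := by
    intro s hs
    have hsw : ‖s • w‖ ≤ ‖w‖ := by
      rw [norm_smul, Real.norm_eq_abs, abs_of_nonneg hs.1]
      exact mul_le_of_le_one_left (norm_nonneg w) hs.2.le
    calc ‖(fderiv ℝ g (v + s • w) - fderiv ℝ g v - fderiv ℝ (fderiv ℝ g) v (s • w)) w‖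
        ≤ ‖fderiv ℝ g (v + s • w) - fderiv ℝ g v - fderiv ℝ (fderiv ℝ g) v (s • w)‖ * ‖w‖ :=
          ContinuousLinearMap.le_opNorm _ w
      _ ≤ (M * ‖s • w‖ ^ 2) * ‖w‖ := by
          have := hR1 (s • w) (hsw.trans hw)
          exact mul_le_mul_of_nonneg_right (by simpa using this) (norm_nonneg w)
      _ ≤ M * ‖w‖ ^ 3 := by
          have : ‖s • w‖ ^ 2 ≤ ‖w‖ ^ 2 := by
            exact pow_le_pow_left₀ (norm_nonneg _) hsw 2
          calc (M * ‖s • w‖ ^ 2) * ‖w‖ ≤ (M * ‖w‖ ^ 2) * ‖w‖ :=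
                mul_le_mul_of_nonneg_right (mul_le_mul_of_nonneg_left this hM0) (norm_nonneg w)
            _ = M * ‖w‖ ^ 3 := by ring
  have key := norm_image_sub_le_of_norm_deriv_le_segment'
    (f := ψ)
    (f' := fun s => (fderiv ℝ g (v + s • w) - fderiv ℝ g v - fderiv ℝ (fderiv ℝ g) v (s • w)) w)
    (C := M * ‖w‖ ^ 3) (a := 0) (b := 1)
    (fun s _ => (hψderiv s).hasDerivWithinAt) hbound 1 (right_mem_Icc.mpr zero_le_one)
  have hψ0 : ψ 0 = 0 := by simp [hψdef]
  have hψ1 : ψ 1 = g (v + w) - g v - fderiv ℝ g v w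
      - (2⁻¹ : ℝ) • fderiv ℝ (fderiv ℝ g) v w w := by
    norm_num [hψdef]
  rw [hψ0, hψ1, sub_zero] at key
  simpa using key

noncomputable def ND {n : ℕ} (N g : (Fin n → ℝ) → Fin n → ℝ) (v : Fin n → ℝ) : Fin n → ℝ :=
  fderiv ℝ g v (N v)

lemma flowDeriv_eq_ND {n : ℕ} (N : (Fin n → ℝ) → Fin n → ℝ) : flowDeriv N = ND N N := rfl

lemma ND_contDiff {n : ℕ} {N g : (Fin n → ℝ) → Fin n → ℝ} {m : ℕ}
    (hN : ContDiff ℝ 4 N) (hm : (m : WithTop ℕ∞) ≤ 4)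
    (hg : ContDiff ℝ ((m : WithTop ℕ∞) + 1) g) :
    ContDiff ℝ m (ND N g) :=
  (hg.fderiv_right le_rfl).clm_apply (hN.of_le hm)

lemma curve_hasDerivAt {n : ℕ} {N : (Fin n → ℝ) → Fin n → ℝ} {u : ℝ → Fin n → ℝ}
    (hu : ∀ s, HasDerivAt u (N (u s)) s) (t s : ℝ) :
    HasDerivAt (fun τ : ℝ => u (t + τ)) (N (u (t + s))) s := by
  have h1 : HasDerivAt (fun τ : ℝ => t + τ) 1 s := by
    simpa using (hasDerivAt_id s).const_add t
  have := (hu (t + s)).scomp s h1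
  rw [one_smul] at this
  exact this

lemma ND_hasDerivAt {n : ℕ} {N g : (Fin n → ℝ) → Fin n → ℝ} {u : ℝ → Fin n → ℝ}
    (hu : ∀ s, HasDerivAt u (N (u s)) s) (hg : Differentiable ℝ g) (t s : ℝ) :
    HasDerivAt (fun τ => g (u (t + τ))) (ND N g (u (t + s))) s :=
  (hg _).hasFDerivAt.comp_hasDerivAt s (curve_hasDerivAt hu t s)

section Monomials
variable {F : Type*} [NormedAddCommGroup F] [NormedSpace ℝ F]

lemma hasDerivAt_lin_smul (x : F) (s : ℝ) : HasDerivAt (fun τ : ℝ => τ • x) x s := by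
  simpa using (hasDerivAt_id s).smul_const x

lemma hasDerivAt_quad_smul (x : F) (s : ℝ) :
    HasDerivAt (fun τ : ℝ => (τ ^ 2 / 2) • x) (s • x) s := by
  have := ((hasDerivAt_pow 2 s).div_const 2).smul_const x
  norm_num at this
  exact this

lemma hasDerivAt_cub_smul (x : F) (s : ℝ) :
    HasDerivAt (fun τ : ℝ => (τ ^ 3 / 6) • x) ((s ^ 2 / 2) • x) s := by
  have := ((hasDerivAt_pow 3 s).div_const 6).smul_const x
  norm_num at this
  convert this using 2
  ring

lemma hasDerivAt_quart_smul (x : F) (s : ℝ) :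
    HasDerivAt (fun τ : ℝ => (τ ^ 4 / 24) • x) ((s ^ 3 / 6) • x) s := by
  have := ((hasDerivAt_pow 4 s).div_const 24).smul_const x
  norm_num at this
  convert this using 2
  ring

end Monomials


/-- The explicit two-stage time discretization
`u* = u + τN(u)/(3(1-ϑ)) + τ²N_t(u)/(12(1-ϑ))`,
`u⁺ = u + τN(u) + (ϑτ²/2)N_t(u) + ((1-ϑ)τ²/2)N_t(u*)`, with
`ϑ = 1/3 + O(τ)` and `ϑ ≠ 1`, is fourth-order accurate:
`u⁺ = u(t+τ) + O(τ⁵)`. -/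
theorem two_stage_fourth_order_accuracy {n : ℕ}
    (N : (Fin n → ℝ) → Fin n → ℝ) (hN : ContDiff ℝ 4 N)
    (u : ℝ → Fin n → ℝ) (hu : ∀ s, HasDerivAt u (N (u s)) s)
    (ϑ : ℝ → ℝ) (hϑ1 : ∀ τ, ϑ τ ≠ 1)
    (hϑ : (fun τ => ϑ τ - 1 / 3) =O[nhds 0] fun τ : ℝ => τ) (t : ℝ) :
    (fun τ : ℝ =>
        (u t + τ • N (u t) + (ϑ τ * τ ^ 2 / 2) • flowDeriv N (u t)
          + ((1 - ϑ τ) * τ ^ 2 / 2) • flowDeriv N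
              (u t + (τ / (3 * (1 - ϑ τ))) • N (u t)
                + (τ ^ 2 / (12 * (1 - ϑ τ))) • flowDeriv N (u t)))
          - u (t + τ))
      =O[nhds 0] fun τ => τ ^ 5 := by
  rw [flowDeriv_eq_ND]
  -- smoothness of the chain
  have hg2 : ContDiff ℝ 3 (ND N N) := ND_contDiff hN (by norm_num) (by exact_mod_cast hN)
  have hg3 : ContDiff ℝ 2 (ND N (ND N N)) := ND_contDiff hN (by norm_num) (by exact_mod_cast hg2)
  have hg4 : ContDiff ℝ 1 (ND N (ND N (ND N N))) :=
    ND_contDiff hN (by norm_num) (by exact_mod_cast hg3)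
  have hg5c : Continuous (ND N (ND N (ND N (ND N N)))) :=
    (ND_contDiff (m := 0) hN (by norm_num) (by exact_mod_cast hg4)).continuous
  have hud : Differentiable ℝ u := fun s => (hu s).differentiableAt
  have hcu : Continuous (fun τ : ℝ => u (t + τ)) :=
    hud.continuous.comp (continuous_const.add continuous_id)
  -- Taylor expansion of the exact solution, with O(τ^5) remainder
  have h5O : (fun τ : ℝ => ND N (ND N (ND N (ND N N))) (u (t + τ))) =O[nhds 0]
      fun τ : ℝ => τ ^ 0 := by
    simp only [pow_zero]
    exact ((hg5c.comp hcu).tendsto 0).isBigO_one ℝ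
  have h4O : (fun τ : ℝ => ND N (ND N (ND N N)) (u (t + τ)) - ND N (ND N (ND N N)) (u t))
      =O[nhds 0] fun τ : ℝ => τ ^ 1 :=
    isBigO_pow_succ_of_hasDerivAt
      (fun s => (ND_hasDerivAt hu (hg4.differentiable one_ne_zero) t s).sub_const _)
      (by simp) h5O
  have h3O : (fun τ : ℝ => ND N (ND N N) (u (t + τ)) - ND N (ND N N) (u t)
        - τ • ND N (ND N (ND N N)) (u t))
      =O[nhds 0] fun τ : ℝ => τ ^ 2 :=
    isBigO_pow_succ_of_hasDerivAt
      (fun s => ((ND_hasDerivAt hu (hg3.differentiable two_ne_zero) t s).sub_const _).sub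
        (hasDerivAt_lin_smul _ s))
      (by simp) h4O
  have h2O : (fun τ : ℝ => ND N N (u (t + τ)) - ND N N (u t)
        - τ • ND N (ND N N) (u t) - (τ ^ 2 / 2) • ND N (ND N (ND N N)) (u t))
      =O[nhds 0] fun τ : ℝ => τ ^ 3 :=
    isBigO_pow_succ_of_hasDerivAt
      (fun s => (((ND_hasDerivAt hu (hg2.differentiable (by norm_num)) t s).sub_const _).sub
        (hasDerivAt_lin_smul _ s)).sub (hasDerivAt_quad_smul _ s))
      (by simp) h3O
  have h1O : (fun τ : ℝ => N (u (t + τ)) - N (u t)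
        - τ • ND N N (u t) - (τ ^ 2 / 2) • ND N (ND N N) (u t)
        - (τ ^ 3 / 6) • ND N (ND N (ND N N)) (u t))
      =O[nhds 0] fun τ : ℝ => τ ^ 4 :=
    isBigO_pow_succ_of_hasDerivAt
      (fun s => ((((ND_hasDerivAt hu (hN.differentiable (by norm_num)) t s).sub_const _).sub
        (hasDerivAt_lin_smul _ s)).sub (hasDerivAt_quad_smul _ s)).sub
        (hasDerivAt_cub_smul _ s))
      (by simp) h2O
  have h0O : (fun τ : ℝ => u (t + τ) - u t
        - τ • N (u t) - (τ ^ 2 / 2) • ND N N (u t) - (τ ^ 3 / 6) • ND N (ND N N) (u t)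
        - (τ ^ 4 / 24) • ND N (ND N (ND N N)) (u t))
      =O[nhds 0] fun τ : ℝ => τ ^ 5 :=
    isBigO_pow_succ_of_hasDerivAt
      (fun s => (((((curve_hasDerivAt hu t s).sub_const _).sub
        (hasDerivAt_lin_smul _ s)).sub (hasDerivAt_quad_smul _ s)).sub
        (hasDerivAt_cub_smul _ s)).sub (hasDerivAt_quart_smul _ s))
      (by simp) h1O
    -- second-order derivative formulas
  have hd3 : ND N (ND N N) (u t) = fderiv ℝ (ND N N) (u t) (N (u t)) := rfl
  have hd4 : ND N (ND N (ND N N)) (u t) = fderiv ℝ (ND N N) (u t) (ND N N (u t)) + fderiv ℝ (fderiv ℝ (ND N N)) (u t) (N (u t)) (N (u t)) := by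
    have hc : DifferentiableAt ℝ (fderiv ℝ (ND N N)) (u t) :=
      ((hg2.fderiv_right (m := 2) (by norm_num)).differentiable two_ne_zero).differentiableAt
    have hstep : ND N (ND N (ND N N)) (u t)
        = fderiv ℝ (fun x => fderiv ℝ (ND N N) x (N x)) (u t) (N (u t)) := rfl
    rw [hstep, fderiv_clm_apply hc (hN.differentiable (by norm_num)).differentiableAt]
    rfl
  -- the key algebraic identity
  have claim : ∀ τ : ℝ,
      ((u t + τ • N (u t) + (ϑ τ * τ ^ 2 / 2) • ND N N (u t) + ((1 - ϑ τ) * τ ^ 2 / 2) • ND N N (u t + (τ / (3 * (1 - ϑ τ))) • N (u t) + (τ ^ 2 / (12 * (1 - ϑ τ))) • ND N N (u t))) - u (t + τ))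
      = (τ ^ 4 * (3 * ϑ τ - 1) / (72 * (1 - ϑ τ))) • fderiv ℝ (fderiv ℝ (ND N N)) (u t) (N (u t)) (N (u t))
      + (τ ^ 5 / (144 * (1 - ϑ τ))) • (fderiv ℝ (fderiv ℝ (ND N N)) (u t) (N (u t)) (ND N N (u t)) + fderiv ℝ (fderiv ℝ (ND N N)) (u t) (ND N N (u t)) (N (u t)))
      + (τ ^ 6 / (576 * (1 - ϑ τ))) • fderiv ℝ (fderiv ℝ (ND N N)) (u t) (ND N N (u t)) (ND N N (u t))
      + ((1 - ϑ τ) * τ ^ 2 / 2) • (ND N N (u t + (τ / (3 * (1 - ϑ τ))) • N (u t) + (τ ^ 2 / (12 * (1 - ϑ τ))) • ND N N (u t)) - ND N N (u t) - fderiv ℝ (ND N N) (u t) (((τ / (3 * (1 - ϑ τ))) • N (u t) + (τ ^ 2 / (12 * (1 - ϑ τ))) • ND N N (u t))) - (2⁻¹ : ℝ) • fderiv ℝ (fderiv ℝ (ND N N)) (u t) (((τ / (3 * (1 - ϑ τ))) • N (u t) + (τ ^ 2 / (12 * (1 - ϑ τ))) • ND N N (u t))) (((τ / (3 * (1 - ϑ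 τ))) • N (u t) + (τ ^ 2 / (12 * (1 - ϑ τ))) • ND N N (u t))))
      - (u (t + τ) - u t - τ • N (u t) - (τ ^ 2 / 2) • ND N N (u t) - (τ ^ 3 / 6) • fderiv ℝ (ND N N) (u t) (N (u t)) - (τ ^ 4 / 24) • (fderiv ℝ (ND N N) (u t) (ND N N (u t)) + fderiv ℝ (fderiv ℝ (ND N N)) (u t) (N (u t)) (N (u t)))) := by
    intro τ
    have he : (1 : ℝ) - ϑ τ ≠ 0 := sub_ne_zero.mpr (Ne.symm (hϑ1 τ))
    simp only [map_add, map_smul, ContinuousLinearMap.add_apply,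
      ContinuousLinearMap.smul_apply, smul_add, smul_smul]
    match_scalars <;> field_simp <;> ring
    -- eventual bounds coming from ϑ = 1/3 + O(τ)
  obtain ⟨C, hC⟩ := hϑ.bound
  have htend : Tendsto (fun τ : ℝ => C * ‖τ‖) (nhds 0) (nhds 0) := by
    simpa using ((continuous_norm.tendsto (0 : ℝ)).const_mul C)
  have h13 : ∀ᶠ τ : ℝ in nhds 0, C * ‖τ‖ ≤ 1 / 3 :=
    htend.eventually_le_const (by norm_num)
  have he23 : ∀ᶠ τ : ℝ in nhds 0, 1 / 3 ≤ 1 - ϑ τ ∧ 1 - ϑ τ ≤ 1 := by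
    filter_upwards [hC, h13] with τ h1 h2
    have h3 : |ϑ τ - 1 / 3| ≤ 1 / 3 := by
      rw [← Real.norm_eq_abs]; exact h1.trans h2
    rw [abs_le] at h3
    constructor <;> linarith [h3.1, h3.2]
  have habs1 : ∀ᶠ τ : ℝ in nhds 0, |τ| ≤ 1 := by
    refine Metric.eventually_nhds_iff.mpr ⟨1, one_pos, fun {y} hy => ?_⟩
    rw [Real.dist_eq, sub_zero] at hy; exact hy.le
  -- the four error terms are O(τ^5)
  have T1 : (fun τ : ℝ => (τ ^ 4 * (3 * ϑ τ - 1) / (72 * (1 - ϑ τ))) • fderiv ℝ (fderiv ℝ (ND N N)) (u t) (N (u t)) (N (u t))) =O[nhds 0] fun τ : ℝ => τ ^ 5 := by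
    refine smul_const_isBigO ?_ _
    rw [isBigO_iff]
    refine ⟨|C| * 3 / 24, ?_⟩
    filter_upwards [hC, he23] with τ h1 h2
    rw [Real.norm_eq_abs, Real.norm_eq_abs, abs_div, abs_mul, abs_pow]
    have hnum : |ϑ τ - 1 / 3| ≤ |C| * |τ| := by
      rw [← Real.norm_eq_abs (ϑ τ - 1/3), ← Real.norm_eq_abs τ]
      exact h1.trans (mul_le_mul_of_nonneg_right (le_abs_self C) (norm_nonneg τ))
    have h3 : |3 * ϑ τ - 1| = 3 * |ϑ τ - 1 / 3| := by
      rw [show 3 * ϑ τ - 1 = 3 * (ϑ τ - 1 / 3) by ring, abs_mul]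
      norm_num
    have hden : (24 : ℝ) ≤ |72 * (1 - ϑ τ)| := by
      rw [abs_of_nonneg (by linarith [h2.1])]
      linarith [h2.1]
    calc |τ| ^ 4 * |3 * ϑ τ - 1| / |72 * (1 - ϑ τ)|
        ≤ |τ| ^ 4 * (3 * (|C| * |τ|)) / 24 := by
          apply div_le_div₀ (by positivity) ?_ (by norm_num) hden
          refine mul_le_mul_of_nonneg_left ?_ (by positivity)
          rw [h3]; linarith
      _ = |C| * 3 / 24 * |τ ^ 5| := by rw [abs_pow]; ring
  have T2 : (fun τ : ℝ => (τ ^ 5 / (144 * (1 - ϑ τ))) • (fderiv ℝ (fderiv ℝ (ND N N)) (u t) (N (u t)) (ND N N (u t)) + fderiv ℝ (fderiv ℝ (ND N N)) (u t) (ND N N (u t)) (N (u t)))) =O[nhds 0] fun τ : ℝ => τ ^ 5 := by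
    refine smul_const_isBigO ?_ _
    rw [isBigO_iff]
    refine ⟨1 / 48, ?_⟩
    filter_upwards [he23] with τ h2
    rw [Real.norm_eq_abs, Real.norm_eq_abs, abs_div]
    have hden : (48 : ℝ) ≤ |144 * (1 - ϑ τ)| := by
      rw [abs_of_nonneg (by linarith [h2.1])]
      linarith [h2.1]
    calc |τ ^ 5| / |144 * (1 - ϑ τ)| ≤ |τ ^ 5| / 48 :=
          div_le_div_of_nonneg_left (abs_nonneg _) (by norm_num) hden
      _ = 1 / 48 * |τ ^ 5| := by ring
  have T3 : (fun τ : ℝ => (τ ^ 6 / (576 * (1 - ϑ τ))) • fderiv ℝ (fderiv ℝ (ND N N)) (u t) (ND N N (u t)) (ND N N (u t))) =O[nhds 0] fun τ : ℝ => τ ^ 5 := by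
    refine smul_const_isBigO ?_ _
    rw [isBigO_iff]
    refine ⟨1, ?_⟩
    filter_upwards [he23, habs1] with τ h2 h1
    rw [Real.norm_eq_abs, Real.norm_eq_abs, abs_div]
    have hden : (192 : ℝ) ≤ |576 * (1 - ϑ τ)| := by
      rw [abs_of_nonneg (by linarith [h2.1])]
      linarith [h2.1]
    have h65 : |τ ^ 6| ≤ |τ ^ 5| := by
      rw [abs_pow, abs_pow]
      exact pow_le_pow_of_le_one (abs_nonneg τ) h1 (by norm_num)
    calc |τ ^ 6| / |576 * (1 - ϑ τ)| ≤ |τ ^ 6| / 192 :=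
          div_le_div_of_nonneg_left (abs_nonneg _) (by norm_num) hden
      _ ≤ |τ ^ 5| := by
          have h0 : (0:ℝ) ≤ |τ ^ 6| := abs_nonneg _
          linarith
      _ = 1 * |τ ^ 5| := by ring
  -- the stage-map Taylor remainder term
  obtain ⟨M, hM0, hM⟩ := cubic_remainder_bound hg2 (u t)
  have T4 : (fun τ : ℝ => ((1 - ϑ τ) * τ ^ 2 / 2) • (ND N N (u t + (τ / (3 * (1 - ϑ τ))) • N (u t) + (τ ^ 2 / (12 * (1 - ϑ τ))) • ND N N (u t)) - ND N N (u t) - fderiv ℝ (ND N N) (u t) (((τ / (3 * (1 - ϑ τ))) • N (u t) + (τ ^ 2 / (12 * (1 - ϑ τ))) • ND N N (u t))) - (2⁻¹ : ℝ) • fderiv ℝ (fderiv ℝ (ND N N)) (u t) (((τ / (3 * (1 - ϑ τ))) • N (u t) + (τ ^ 2 / (12 * (1 - ϑ τ))) • ND N N (u t))) (((τ / (3 * (1 - ϑ τ))) • N (u t) + (τ ^ 2 / (12 * (1 - ϑ τ))) • ND N N (u t))))) =O[nhds 0] fun τ : ℝ => τ ^ 5 := by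
    set K := ‖N (u t)‖ + ‖ND N N (u t)‖ + 1 with hKdef
    have hKpos : 0 < K := by positivity
    have hevK : ∀ᶠ τ : ℝ in nhds 0, |τ| ≤ K⁻¹ := by
      refine Metric.eventually_nhds_iff.mpr ⟨K⁻¹, inv_pos.mpr hKpos, fun {y} hy => ?_⟩
      rw [Real.dist_eq, sub_zero] at hy; exact hy.le
    rw [isBigO_iff]
    refine ⟨M * K ^ 3, ?_⟩
    filter_upwards [he23, habs1, hevK] with τ h23 habs hKt
    have h1ϑ : (0:ℝ) ≤ 1 - ϑ τ := by linarith [h23.1]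
    have hx : |τ / (3 * (1 - ϑ τ))| ≤ |τ| := by
      rw [abs_div, abs_of_nonneg (by linarith : (0:ℝ) ≤ 3 * (1 - ϑ τ))]
      exact div_le_self (abs_nonneg τ) (by linarith [h23.1])
    have hy : |τ ^ 2 / (12 * (1 - ϑ τ))| ≤ |τ| := by
      rw [abs_div, abs_of_nonneg (by linarith : (0:ℝ) ≤ 12 * (1 - ϑ τ))]
      have h4le : (4:ℝ) ≤ 12 * (1 - ϑ τ) := by linarith [h23.1]
      calc |τ ^ 2| / (12 * (1 - ϑ τ)) ≤ |τ ^ 2| / 4 :=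
            div_le_div_of_nonneg_left (abs_nonneg _) (by norm_num) h4le
        _ ≤ |τ| := by
            rw [abs_pow]
            have := pow_le_pow_of_le_one (abs_nonneg τ) habs (show 1 ≤ 2 by norm_num)
            rw [pow_one] at this
            linarith [abs_nonneg τ]
    have hwK : ‖((τ / (3 * (1 - ϑ τ))) • N (u t) + (τ ^ 2 / (12 * (1 - ϑ τ))) • ND N N (u t))‖ ≤ K * |τ| := by
      calc ‖((τ / (3 * (1 - ϑ τ))) • N (u t) + (τ ^ 2 / (12 * (1 - ϑ τ))) • ND N N (u t))‖ ≤ ‖(τ / (3 * (1 - ϑ τ))) • N (u t)‖ + ‖(τ ^ 2 / (12 * (1 - ϑ τ))) • ND N N (u t)‖ := norm_add_le _ _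
        _ = |(τ / (3 * (1 - ϑ τ)))| * ‖N (u t)‖ + |(τ ^ 2 / (12 * (1 - ϑ τ)))| * ‖ND N N (u t)‖ := by
            rw [norm_smul, norm_smul, Real.norm_eq_abs, Real.norm_eq_abs]
        _ ≤ |τ| * ‖N (u t)‖ + |τ| * ‖ND N N (u t)‖ :=
            add_le_add (mul_le_mul_of_nonneg_right hx (norm_nonneg _))
              (mul_le_mul_of_nonneg_right hy (norm_nonneg _))
        _ = (‖N (u t)‖ + ‖ND N N (u t)‖) * |τ| := by ring
        _ ≤ K * |τ| := mul_le_mul_of_nonneg_right (by rw [hKdef]; linarith) (abs_nonneg τ)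
    have hw1 : ‖((τ / (3 * (1 - ϑ τ))) • N (u t) + (τ ^ 2 / (12 * (1 - ϑ τ))) • ND N N (u t))‖ ≤ 1 := by
      refine hwK.trans ?_
      calc K * |τ| ≤ K * K⁻¹ := mul_le_mul_of_nonneg_left hKt hKpos.le
        _ = 1 := mul_inv_cancel₀ hKpos.ne'
    have hMw := hM ((τ / (3 * (1 - ϑ τ))) • N (u t) + (τ ^ 2 / (12 * (1 - ϑ τ))) • ND N N (u t)) hw1
    rw [← add_assoc] at hMw
    rw [norm_smul]
    have hsc : ‖(1 - ϑ τ) * τ ^ 2 / 2‖ ≤ τ ^ 2 / 2 := by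
      rw [Real.norm_eq_abs,
        abs_of_nonneg (div_nonneg (mul_nonneg h1ϑ (sq_nonneg τ)) (by norm_num))]
      nlinarith [sq_nonneg τ]
    have hRw : ‖ND N N (u t + (τ / (3 * (1 - ϑ τ))) • N (u t) + (τ ^ 2 / (12 * (1 - ϑ τ))) • ND N N (u t)) - ND N N (u t) - fderiv ℝ (ND N N) (u t) (((τ / (3 * (1 - ϑ τ))) • N (u t) + (τ ^ 2 / (12 * (1 - ϑ τ))) • ND N N (u t))) - (2⁻¹ : ℝ) • fderiv ℝ (fderiv ℝ (ND N N)) (u t) (((τ / (3 * (1 - ϑ τ))) • N (u t) + (τ ^ 2 / (12 * (1 - ϑ τ))) • ND N N (u t))) (((τ / (3 * (1 - ϑ τ))) • N (u t) + (τ ^ 2 / (12 * (1 - ϑ τ))) • ND N N (u t)))‖ ≤ M * (K * |τ|) ^ 3 := by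
      refine hMw.trans ?_
      refine mul_le_mul_of_nonneg_left ?_ hM0
      exact pow_le_pow_left₀ (norm_nonneg _) hwK 3
    calc ‖(1 - ϑ τ) * τ ^ 2 / 2‖ * ‖ND N N (u t + (τ / (3 * (1 - ϑ τ))) • N (u t) + (τ ^ 2 / (12 * (1 - ϑ τ))) • ND N N (u t)) - ND N N (u t) - fderiv ℝ (ND N N) (u t) (((τ / (3 * (1 - ϑ τ))) • N (u t) + (τ ^ 2 / (12 * (1 - ϑ τ))) • ND N N (u t))) - (2⁻¹ : ℝ) • fderiv ℝ (fderiv ℝ (ND N N)) (u t) (((τ / (3 * (1 - ϑ τ))) • N (u t) + (τ ^ 2 / (12 * (1 - ϑ τ))) • ND N N (u t))) (((τ / (3 * (1 - ϑ τ))) • N (u t) + (τ ^ 2 / (12 * (1 - ϑ τ))) • ND N N (u t)))‖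
        ≤ (τ ^ 2 / 2) * (M * (K * |τ|) ^ 3) :=
          mul_le_mul hsc hRw (norm_nonneg _) (by positivity)
      _ = M * K ^ 3 * |τ| ^ 5 / 2 := by rw [← sq_abs τ]; ring
      _ ≤ M * K ^ 3 * ‖τ ^ 5‖ := by
          rw [Real.norm_eq_abs, abs_pow]
          have h0 : (0:ℝ) ≤ M * K ^ 3 * |τ| ^ 5 := by positivity
          exact div_le_self h0 one_le_two
  -- the ODE Taylor remainder in canonical form
  have h0O' : (fun τ : ℝ => (u (t + τ) - u t - τ • N (u t) - (τ ^ 2 / 2) • ND N N (u t) - (τ ^ 3 / 6) • fderiv ℝ (ND N N) (u t) (N (u t)) - (τ ^ 4 / 24) • (fderiv ℝ (ND N N) (u t) (ND N N (u t)) + fderiv ℝ (fderiv ℝ (ND N N)) (u t) (N (u t)) (N (u t))))) =O[nhds 0] fun τ : ℝ => τ ^ 5 :=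
    h0O.congr_left fun τ => by rw [hd3, hd4]
  -- assemble
  exact ((((T1.add T2).add T3).add T4).sub h0O').congr_left fun τ => (claim τ).symm
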